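/- arXiv:1012.4144 — 2 statements merged into one kernel-verified Lean document; each statement's English description precedes it below -/
import Mathlib

section
/- For real s ∈ (-1, 1), the principal value integral over θ ∈ [-π/2, π/2] of 1/(s - sin θ) dθ equals 0. -/
open Real Filter


noncomputable def Fa (s θ : ℝ) : ℝ :=
  (Real.log (Real.cos ((θ + Real.arcsin s) / 2)) -
    Real.log (Real.sin ((θ - Real.arcsin s) / 2))) / Real.cos (Real.arcsin s)

lemma hasDerivAt_Fa (s : ℝ) (hs : s ∈ Set.Ioo (-1 : ℝ) 1) (θ : ℝ)
    (h1 : Real.cos ((θ + Real.arcsin s) / 2) ≠ 0)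
    (h2 : Real.sin ((θ - Real.arcsin s) / 2) ≠ 0) :
    HasDerivAt (Fa s) (1 / (s - Real.sin θ)) θ := by
  obtain ⟨hs1, hs2⟩ := hs
  set α := Real.arcsin s with hα
  have hsin : Real.sin α = s := Real.sin_arcsin hs1.le hs2.le
  have hcos : Real.cos α = Real.cos ((θ + α) / 2) * Real.cos ((θ - α) / 2)
      + Real.sin ((θ + α) / 2) * Real.sin ((θ - α) / 2) := by
    rw [← Real.cos_sub]; ring_nf
  have hc : Real.cos α ≠ 0 := by
    rw [Real.cos_arcsin]
    exact ne_of_gt (Real.sqrt_pos.2 (by nlinarith))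
  have hden : s - Real.sin θ = -2 * Real.sin ((θ - α) / 2) * Real.cos ((θ + α) / 2) := by
    have := Real.sin_sub_sin θ α
    rw [hsin] at this; linarith
  have hne : s - Real.sin θ ≠ 0 := by
    rw [hden]; exact mul_ne_zero (mul_ne_zero (by norm_num) h2) h1
  have d1 : HasDerivAt (fun x : ℝ => (x + α) / 2) (1 / 2) θ := by
    simpa using ((hasDerivAt_id θ).add_const α).div_const 2
  have d1' : HasDerivAt (fun x : ℝ => (x - α) / 2) (1 / 2) θ := by
    simpa using ((hasDerivAt_id θ).sub_const α).div_const 2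
  have d2 : HasDerivAt (fun x : ℝ => Real.cos ((x + α) / 2))
      (-Real.sin ((θ + α) / 2) * (1 / 2)) θ := (Real.hasDerivAt_cos _).comp θ d1
  have d2' : HasDerivAt (fun x : ℝ => Real.sin ((x - α) / 2))
      (Real.cos ((θ - α) / 2) * (1 / 2)) θ := (Real.hasDerivAt_sin _).comp θ d1'
  have d3 : HasDerivAt (fun x : ℝ => Real.log (Real.cos ((x + α) / 2)))
      ((Real.cos ((θ + α) / 2))⁻¹ * (-Real.sin ((θ + α) / 2) * (1 / 2))) θ :=
    by have := (Real.hasDerivAt_log h1).comp θ d2; exact this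
  have d3' : HasDerivAt (fun x : ℝ => Real.log (Real.sin ((x - α) / 2)))
      ((Real.sin ((θ - α) / 2))⁻¹ * (Real.cos ((θ - α) / 2) * (1 / 2))) θ :=
    by have := (Real.hasDerivAt_log h2).comp θ d2'; exact this
  have d4 := (d3.sub d3').div_const (Real.cos α)
  refine d4.congr_deriv ?_; symm
  field_simp
  linear_combination (2 * Real.cos ((θ + α) / 2) * Real.sin ((θ - α) / 2)) * hcos + (Real.cos ((θ + α) / 2) * Real.cos ((θ - α) / 2) + Real.sin ((θ + α) / 2) * Real.sin ((θ - α) / 2)) * hden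

lemma Fa_pi_div_two (s : ℝ) : Fa s (π / 2) = 0 := by
  have h : (π / 2 - Real.arcsin s) / 2 = π / 2 - (π / 2 + Real.arcsin s) / 2 := by ring
  rw [Fa, h, Real.sin_pi_div_two_sub, sub_self, zero_div]

lemma Fa_neg_pi_div_two (s : ℝ) : Fa s (-(π / 2)) = 0 := by
  have h1 : (-(π / 2) + Real.arcsin s) / 2 = -((π / 2 - Real.arcsin s) / 2) := by ring
  have h2 : (-(π / 2) - Real.arcsin s) / 2 = -((π / 2 + Real.arcsin s) / 2) := by ring
  have h3 : (π / 2 + Real.arcsin s) / 2 = π / 2 - (π / 2 - Real.arcsin s) / 2 := by ring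
  rw [Fa, h1, h2, Real.cos_neg, Real.sin_neg, Real.log_neg_eq_log, h3,
    Real.sin_pi_div_two_sub, sub_self, zero_div]

lemma key_eq (s : ℝ) (hs : s ∈ Set.Ioo (-1 : ℝ) 1) (ε : ℝ) (hε0 : 0 < ε)
    (hε1 : ε < 1 + s) (hε2 : ε < 1 - s) :
    (∫ θ in (-(π / 2))..(π / 2),
        if ε < |Real.sin θ - s| then 1 / (s - Real.sin θ) else 0) =
      2 * (Real.log (Real.cos ((Real.arcsin (s - ε) + Real.arcsin s) / 2)) -
        Real.log (Real.cos ((Real.arcsin (s + ε) + Real.arcsin s) / 2))) /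
        Real.cos (Real.arcsin s) := by
  obtain ⟨hs1, hs2⟩ := hs
  set α := Real.arcsin s with hαdef
  set a := Real.arcsin (s - ε) with hadef
  set b := Real.arcsin (s + ε) with hbdef
  have hsε1 : (-1 : ℝ) < s - ε := by linarith
  have hsε2 : s + ε < 1 := by linarith
  have hsinα : Real.sin α = s := Real.sin_arcsin hs1.le hs2.le
  have hsina : Real.sin a = s - ε := Real.sin_arcsin hsε1.le (by linarith)
  have hsinb : Real.sin b = s + ε := Real.sin_arcsin (by linarith) hsε2.le
  have hα1 : -(π / 2) < α := Real.neg_pi_div_two_lt_arcsin.2 hs1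
  have hα2 : α < π / 2 := Real.arcsin_lt_pi_div_two.2 hs2
  have ha1 : -(π / 2) < a := Real.neg_pi_div_two_lt_arcsin.2 hsε1
  have ha2 : a < π / 2 := Real.arcsin_lt_pi_div_two.2 (by linarith)
  have hb1 : -(π / 2) < b := Real.neg_pi_div_two_lt_arcsin.2 (by linarith)
  have hb2 : b < π / 2 := Real.arcsin_lt_pi_div_two.2 hsε2
  have haα : a < α := Real.strictMonoOn_arcsin ⟨hsε1.le, by linarith⟩
    ⟨hs1.le, hs2.le⟩ (by linarith)
  have hαb : α < b := Real.strictMonoOn_arcsin ⟨hs1.le, hs2.le⟩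
    ⟨by linarith, hsε2.le⟩ (by linarith)
  clear_value α a b
  have hcpos : 0 < Real.cos α := Real.cos_pos_of_mem_Ioo ⟨hα1, hα2⟩
  -- positivity of cos ((θ + α)/2) for θ ∈ [-π/2, π/2]
  have hcosP : ∀ θ ∈ Set.Icc (-(π / 2)) (π / 2), 0 < Real.cos ((θ + α) / 2) := by
    intro θ hθ
    exact Real.cos_pos_of_mem_Ioo ⟨by rcases hθ with ⟨h, _⟩; linarith,
      by rcases hθ with ⟨_, h⟩; linarith⟩
  set f : ℝ → ℝ := fun θ => 1 / (s - Real.sin θ) with hfdef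
  set φ : ℝ → ℝ := fun θ => if ε < |Real.sin θ - s| then 1 / (s - Real.sin θ) else 0
    with hφdef
  have hmono := Real.strictMonoOn_sin
  -- f continuous (hence integrable) on [-π/2, a]
  have hcontL : ContinuousOn f (Set.uIcc (-(π / 2)) a) := by
    rw [Set.uIcc_of_le (by linarith)]
    apply ContinuousOn.div continuousOn_const
      (continuous_const.sub Real.continuous_sin).continuousOn
    intro θ hθ
    have : Real.sin θ ≤ s - ε := by
      rw [← hsina]
      exact hmono.monotoneOn ⟨hθ.1, by linarith [hθ.2]⟩ ⟨ha1.le, ha2.le⟩ hθ.2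
    intro h; rw [Pi.sub_apply, sub_eq_zero] at h; nlinarith [h]
  have hcontR : ContinuousOn f (Set.uIcc b (π / 2)) := by
    rw [Set.uIcc_of_le (by linarith)]
    apply ContinuousOn.div continuousOn_const
      (continuous_const.sub Real.continuous_sin).continuousOn
    intro θ hθ
    have : s + ε ≤ Real.sin θ := by
      rw [← hsinb]
      exact hmono.monotoneOn ⟨hb1.le, hb2.le⟩ ⟨by linarith [hθ.1], hθ.2⟩ hθ.1
    intro h; rw [Pi.sub_apply, sub_eq_zero] at h; nlinarith [h]
  have hintL : IntervalIntegrable f MeasureTheory.volume (-(π / 2)) a :=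
    hcontL.intervalIntegrable
  have hintR : IntervalIntegrable f MeasureTheory.volume b (π / 2) :=
    hcontR.intervalIntegrable
  -- FTC on left and right intervals
  have hftcL : (∫ θ in (-(π / 2))..a, f θ) = Fa s a - Fa s (-(π / 2)) := by
    apply intervalIntegral.integral_eq_sub_of_hasDerivAt _ hintL
    intro θ hθ
    rw [Set.uIcc_of_le (by linarith)] at hθ
    apply hasDerivAt_Fa s ⟨hs1, hs2⟩
    · rw [← hαdef]; exact ne_of_gt (hcosP θ ⟨hθ.1, by linarith [hθ.2]⟩)
    · rw [← hαdef]
      apply ne_of_lt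
      apply Real.sin_neg_of_neg_of_neg_pi_lt
      · rcases hθ with ⟨_, h⟩; linarith
      · rcases hθ with ⟨h, _⟩; nlinarith [Real.pi_pos]
  have hftcR : (∫ θ in b..(π / 2), f θ) = Fa s (π / 2) - Fa s b := by
    apply intervalIntegral.integral_eq_sub_of_hasDerivAt _ hintR
    intro θ hθ
    rw [Set.uIcc_of_le (by linarith)] at hθ
    apply hasDerivAt_Fa s ⟨hs1, hs2⟩
    · rw [← hαdef]; exact ne_of_gt (hcosP θ ⟨by linarith [hθ.1], hθ.2⟩)
    · rw [← hαdef]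
      apply ne_of_gt
      apply Real.sin_pos_of_pos_of_lt_pi
      · rcases hθ with ⟨h, _⟩; linarith
      · rcases hθ with ⟨_, h⟩; nlinarith [Real.pi_pos]
  -- φ agrees a.e. with f on the side intervals, and is 0 on [a, b]
  have haea : ∀ᵐ θ : ℝ, θ ≠ a := by
    rw [MeasureTheory.ae_iff]
    convert MeasureTheory.measure_singleton (μ := MeasureTheory.volume) a using 2
    ext x; simp
  have hφL : (∫ θ in (-(π / 2))..a, φ θ) = ∫ θ in (-(π / 2))..a, f θ := by
    apply intervalIntegral.integral_congr_ae
    filter_upwards [haea] with θ hθa hθ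
    rw [Set.uIoc_of_le (by linarith)] at hθ
    have hθa' : θ < a := lt_of_le_of_ne hθ.2 hθa
    have : Real.sin θ < s - ε := by
      rw [← hsina]
      exact hmono ⟨hθ.1.le, by linarith⟩ ⟨ha1.le, ha2.le⟩ hθa'
    have hcond : ε < |Real.sin θ - s| := by
      rw [abs_sub_comm, abs_of_pos (by linarith)]; linarith
    simp only [hφdef, hfdef, if_pos hcond]
  have hφR : (∫ θ in b..(π / 2), φ θ) = ∫ θ in b..(π / 2), f θ := by
    apply intervalIntegral.integral_congr_ae
    apply Filter.Eventually.of_forall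
    intro θ hθ
    rw [Set.uIoc_of_le (by linarith)] at hθ
    have : s + ε < Real.sin θ := by
      rw [← hsinb]
      exact hmono ⟨hb1.le, hb2.le⟩ ⟨by linarith [hθ.1], hθ.2⟩ hθ.1
    have hcond : ε < |Real.sin θ - s| := by
      rw [abs_of_pos (by linarith)]; linarith
    simp only [hφdef, hfdef, if_pos hcond]
  have hφM0 : Set.EqOn φ (fun _ => (0 : ℝ)) (Set.uIcc a b) := by
    intro θ hθ
    rw [Set.uIcc_of_le (haα.le.trans hαb.le)] at hθ
    have h1 : s - ε ≤ Real.sin θ := by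
      rw [← hsina]
      exact hmono.monotoneOn ⟨ha1.le, ha2.le⟩ ⟨by linarith [hθ.1], by linarith [hθ.2]⟩ hθ.1
    have h2 : Real.sin θ ≤ s + ε := by
      rw [← hsinb]
      exact hmono.monotoneOn ⟨by linarith [hθ.1], by linarith [hθ.2]⟩ ⟨hb1.le, hb2.le⟩ hθ.2
    have : ¬ ε < |Real.sin θ - s| := by
      rw [not_lt, abs_le]; constructor <;> linarith
    simp only [hφdef, if_neg this]
  have hφM : (∫ θ in a..b, φ θ) = 0 := by
    rw [intervalIntegral.integral_congr hφM0, intervalIntegral.integral_zero]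
  -- integrability of φ on the three pieces
  have hφintL : IntervalIntegrable φ MeasureTheory.volume (-(π / 2)) a := by
    apply hintL.congr_ae
    apply (MeasureTheory.ae_restrict_iff' (μ := MeasureTheory.volume)
      (p := fun θ => f θ = φ θ) measurableSet_uIoc).2
    filter_upwards [haea] with θ hθa hθ
    rw [Set.uIoc_of_le (by linarith)] at hθ
    have hθa' : θ < a := lt_of_le_of_ne hθ.2 hθa
    have : Real.sin θ < s - ε := by
      rw [← hsina]
      exact hmono ⟨hθ.1.le, by linarith⟩ ⟨ha1.le, ha2.le⟩ hθa'
    have hcond : ε < |Real.sin θ - s| := by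
      rw [abs_sub_comm, abs_of_pos (by linarith)]; linarith
    simp only [hφdef, hfdef, if_pos hcond]
  have hφintM : IntervalIntegrable φ MeasureTheory.volume a b := by
    apply (intervalIntegrable_const (c := (0 : ℝ))).congr_ae
    apply (MeasureTheory.ae_restrict_iff' (μ := MeasureTheory.volume)
      (p := fun θ => (0 : ℝ) = φ θ) measurableSet_uIoc).2
    apply Filter.Eventually.of_forall
    intro θ hθ
    exact (hφM0 (Set.uIoc_subset_uIcc hθ)).symm
  have hφintR : IntervalIntegrable φ MeasureTheory.volume b (π / 2) := by
    apply hintR.congr_ae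
    apply (MeasureTheory.ae_restrict_iff' (μ := MeasureTheory.volume)
      (p := fun θ => f θ = φ θ) measurableSet_uIoc).2
    apply Filter.Eventually.of_forall
    intro θ hθ
    rw [Set.uIoc_of_le (by linarith)] at hθ
    have : s + ε < Real.sin θ := by
      rw [← hsinb]
      exact hmono ⟨hb1.le, hb2.le⟩ ⟨by linarith [hθ.1], hθ.2⟩ hθ.1
    have hcond : ε < |Real.sin θ - s| := by
      rw [abs_of_pos (by linarith)]; linarith
    simp only [hφdef, hfdef, if_pos hcond]
  -- split the integral
  have hsplit : (∫ θ in (-(π / 2))..(π / 2), φ θ) =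
      (∫ θ in (-(π / 2))..a, φ θ) + (∫ θ in a..b, φ θ) + (∫ θ in b..(π / 2), φ θ) := by
    rw [intervalIntegral.integral_add_adjacent_intervals hφintL hφintM,
      intervalIntegral.integral_add_adjacent_intervals (hφintL.trans hφintM) hφintR]
  have hmain : (∫ θ in (-(π / 2))..(π / 2), φ θ) = Fa s a - Fa s b := by
    rw [hsplit, hφL, hφR, hφM, hftcL, hftcR, Fa_pi_div_two, Fa_neg_pi_div_two]
    ring
  -- compute Fa s a - Fa s b explicitly
  have hcA : 0 < Real.cos ((a + α) / 2) := hcosP a ⟨ha1.le, ha2.le⟩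
  have hcB : 0 < Real.cos ((b + α) / 2) := hcosP b ⟨hb1.le, hb2.le⟩
  have hsinea : Real.sin ((a - α) / 2) = -(ε / (2 * Real.cos ((a + α) / 2))) := by
    have h := Real.sin_sub_sin a α
    rw [hsina, hsinα] at h
    rw [show -(ε / (2 * Real.cos ((a + α) / 2))) = (-ε) / (2 * Real.cos ((a + α) / 2)) by ring,
      eq_div_iff (mul_ne_zero two_ne_zero hcA.ne')]
    linarith only [h]
  have hsineb : Real.sin ((b - α) / 2) = ε / (2 * Real.cos ((b + α) / 2)) := by
    have h := Real.sin_sub_sin b α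
    rw [hsinb, hsinα] at h
    rw [eq_div_iff (mul_ne_zero two_ne_zero hcB.ne')]
    linarith only [h]
  have hlogA : Real.log (Real.sin ((a - α) / 2)) =
      Real.log ε - (Real.log 2 + Real.log (Real.cos ((a + α) / 2))) := by
    rw [hsinea, Real.log_neg_eq_log,
      Real.log_div hε0.ne' (mul_ne_zero two_ne_zero hcA.ne'),
      Real.log_mul (two_ne_zero) hcA.ne']
  have hlogB : Real.log (Real.sin ((b - α) / 2)) =
      Real.log ε - (Real.log 2 + Real.log (Real.cos ((b + α) / 2))) := by
    rw [hsineb, Real.log_div hε0.ne' (mul_ne_zero two_ne_zero hcB.ne'),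
      Real.log_mul (two_ne_zero) hcB.ne']
  rw [hmain]
  simp only [Fa]
  rw [← hαdef, hlogA, hlogB]
  ring

theorem pv_integral_one_div_sub_sin_eq_zero (s : ℝ) (hs : s ∈ Set.Ioo (-1 : ℝ) 1) :
    Tendsto (fun ε : ℝ =>
        ∫ θ in (-(π / 2))..(π / 2),
          if ε < |Real.sin θ - s| then 1 / (s - Real.sin θ) else 0)
      (nhdsWithin 0 (Set.Ioi 0)) (nhds 0) := by
  obtain ⟨hs1, hs2⟩ := hs
  set g : ℝ → ℝ := fun ε =>
    2 * (Real.log (Real.cos ((Real.arcsin (s - ε) + Real.arcsin s) / 2)) -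
      Real.log (Real.cos ((Real.arcsin (s + ε) + Real.arcsin s) / 2))) /
      Real.cos (Real.arcsin s) with hgdef
  have hα1 : -(π / 2) < Real.arcsin s := Real.neg_pi_div_two_lt_arcsin.2 hs1
  have hα2 : Real.arcsin s < π / 2 := Real.arcsin_lt_pi_div_two.2 hs2
  have hcpos : 0 < Real.cos (Real.arcsin s) := Real.cos_pos_of_mem_Ioo ⟨hα1, hα2⟩
  have hg0 : g 0 = 0 := by simp [hgdef]
  have hgc : ContinuousAt g 0 := by
    have h1 : ContinuousAt (fun ε : ℝ => Real.cos ((Real.arcsin (s - ε) + Real.arcsin s) / 2)) 0 :=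
      (Real.continuous_cos.comp (((Real.continuous_arcsin.comp
        (continuous_const.sub continuous_id)).add continuous_const).div_const 2)).continuousAt
    have h2 : ContinuousAt (fun ε : ℝ => Real.cos ((Real.arcsin (s + ε) + Real.arcsin s) / 2)) 0 :=
      (Real.continuous_cos.comp (((Real.continuous_arcsin.comp
        (continuous_const.add continuous_id)).add continuous_const).div_const 2)).continuousAt
    have hv : Real.cos ((Real.arcsin (s - 0) + Real.arcsin s) / 2) ≠ 0 := by
      rw [sub_zero, show (Real.arcsin s + Real.arcsin s) / 2 = Real.arcsin s by ring]
      exact hcpos.ne'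
    have hv' : Real.cos ((Real.arcsin (s + 0) + Real.arcsin s) / 2) ≠ 0 := by
      rw [add_zero, show (Real.arcsin s + Real.arcsin s) / 2 = Real.arcsin s by ring]
      exact hcpos.ne'
    exact (((h1.log hv).sub (h2.log hv')).const_mul 2).div_const _
  have hgt : Tendsto g (nhdsWithin 0 (Set.Ioi 0)) (nhds 0) := by
    have h := (hgc.continuousWithinAt (s := Set.Ioi 0)).tendsto
    rwa [hg0] at h
  apply hgt.congr'
  have hδ : Set.Ioo (0 : ℝ) (min (1 + s) (1 - s)) ∈ nhdsWithin (0 : ℝ) (Set.Ioi 0) :=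
    Ioo_mem_nhdsGT_of_mem ⟨le_refl 0, lt_min (by linarith) (by linarith)⟩
  filter_upwards [hδ] with ε hε
  exact (key_eq s ⟨hs1, hs2⟩ ε hε.1 (lt_of_lt_of_le hε.2 (min_le_left _ _))
    (lt_of_lt_of_le hε.2 (min_le_right _ _))).symm
end

section
/- For s ∈ (-1, 1), the principal value integral over x ∈ [-1, 1] of 1/((s - x)·√(1 - x²)) dx equals 0. -/
open Real Filter

theorem pv_integral_one_div_sqrt_eq_zero (s : ℝ) (hs : s ∈ Set.Ioo (-1 : ℝ) 1) :
    Tendsto (fun ε : ℝ =>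
        (∫ x in (-1 : ℝ)..(s - ε), 1 / ((s - x) * Real.sqrt (1 - x ^ 2))) +
          ∫ x in (s + ε)..(1 : ℝ), 1 / ((s - x) * Real.sqrt (1 - x ^ 2)))
      (nhdsWithin 0 (Set.Ioi 0)) (nhds 0) := by
  obtain ⟨hs1, hs2⟩ := hs
  set f : ℝ → ℝ := fun x => 1 / ((s - x) * Real.sqrt (1 - x ^ 2)) with hfdef
  set t : ℝ := Real.sqrt (1 - s ^ 2) with ht
  have ht0 : 0 < t := Real.sqrt_pos.2 (by nlinarith)
  have ht2 : t ^ 2 = 1 - s ^ 2 := Real.sq_sqrt (by nlinarith)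
  set D : ℝ → ℝ := fun x => 1 - s * x + t * Real.sqrt (1 - x ^ 2) with hDdef
  set F : ℝ → ℝ := fun x => (1 / t) * (Real.log (D x) - Real.log (x - s)) with hFdef
  have habs : |s| < 1 := abs_lt.2 ⟨hs1, hs2⟩
  have hDpos : ∀ x ∈ Set.Icc (-1 : ℝ) 1, 0 < D x := by
    intro x hx
    have h1 : s * x ≤ |s| := by
      calc s * x ≤ |s * x| := le_abs_self _
        _ = |s| * |x| := abs_mul _ _
        _ ≤ |s| * 1 := by
            have : |x| ≤ 1 := abs_le.2 ⟨hx.1, hx.2⟩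
            nlinarith [abs_nonneg s]
        _ = |s| := mul_one _
    have h3 : 0 ≤ t * Real.sqrt (1 - x ^ 2) := mul_nonneg ht0.le (Real.sqrt_nonneg _)
    simp only [hDdef]
    nlinarith
  have hDc : Continuous D := by
    simp only [hDdef]
    fun_prop
  -- derivative of F
  have hderiv : ∀ x ∈ Set.Ioo (-1 : ℝ) 1, x ≠ s → HasDerivAt F (f x) x := by
    intro x hx hxs
    have hu : 0 < 1 - x ^ 2 := by nlinarith [hx.1, hx.2]
    set r : ℝ := Real.sqrt (1 - x ^ 2) with hr
    have hr0 : 0 < r := Real.sqrt_pos.2 hu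
    have hr2 : r ^ 2 = 1 - x ^ 2 := Real.sq_sqrt hu.le
    have hDx : 0 < D x := hDpos x ⟨hx.1.le, hx.2.le⟩
    have hsq : HasDerivAt (fun y : ℝ => Real.sqrt (1 - y ^ 2)) (-x / r) x := by
      have h1 : HasDerivAt (fun y : ℝ => 1 - y ^ 2) (-(2 * x)) x := by
        simpa using ((hasDerivAt_pow 2 x).const_sub 1)
      have h2 := (Real.hasDerivAt_sqrt (ne_of_gt hu)).comp x h1
      refine h2.congr_deriv ?_
      rw [← hr]
      field_simp
    have hD' : HasDerivAt D (-s + t * (-x / r)) x := by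
      have h1 : HasDerivAt (fun y : ℝ => 1 - s * y) (-s) x := by
        simpa using ((hasDerivAt_id x).const_mul s).const_sub 1
      exact h1.add (hsq.const_mul t)
    have hlogD : HasDerivAt (fun y => Real.log (D y)) ((D x)⁻¹ * (-s + t * (-x / r))) x :=
      (Real.hasDerivAt_log (ne_of_gt hDx)).comp x hD'
    have hlogx : HasDerivAt (fun y : ℝ => Real.log (y - s)) ((x - s)⁻¹) x := by
      have h1 : HasDerivAt (fun y : ℝ => y - s) 1 x := (hasDerivAt_id x).sub_const s
      have h2 := (Real.hasDerivAt_log (sub_ne_zero.2 hxs)).comp x h1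
      rw [mul_one] at h2
      exact h2
    have hFd : HasDerivAt F ((1 / t) * ((D x)⁻¹ * (-s + t * (-x / r)) - (x - s)⁻¹)) x :=
      (hlogD.sub hlogx).const_mul (1 / t)
    convert hFd using 1
    have hxs' : x - s ≠ 0 := sub_ne_zero.2 hxs
    have hsx' : s - x ≠ 0 := sub_ne_zero.2 (Ne.symm hxs)
    have hDxe : D x = 1 - s * x + t * r := rfl
    have key : 1 / ((s - x) * r) =
        (1 / t) * ((1 - s * x + t * r)⁻¹ * (-s + t * (-x / r)) - (x - s)⁻¹) := by
      have hDne : (1 : ℝ) - s * x + t * r ≠ 0 := by rw [← hDxe]; exact hDx.ne'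
      rw [mul_comm t r] at hDne ⊢
      field_simp
      linear_combination (-(t * (x - s))) * hr2 + (r * (x - s)) * ht2
    simp only [hfdef, hDxe, ← hr]
    exact key
  -- measurability
  have hfm : Measurable f := by
    have hc : Continuous fun x : ℝ => (s - x) * Real.sqrt (1 - x ^ 2) := by fun_prop
    simpa only [hfdef, one_div, Pi.inv_def] using hc.measurable.inv
  -- continuity of F away from s
  have hFc : ∀ x ∈ Set.Icc (-1 : ℝ) 1, x ≠ s → ContinuousAt F x := by
    intro x hx hxs
    have hDx : 0 < D x := hDpos x hx
    have h1 : ContinuousAt (fun y => Real.log (D y)) x :=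
      hDc.continuousAt.log (ne_of_gt hDx)
    have h2 : ContinuousAt (fun y : ℝ => Real.log (y - s)) x :=
      ((continuous_id.sub continuous_const).continuousAt).log (sub_ne_zero.2 hxs)
    exact (h1.sub h2).const_mul (1 / t)
  set δ : ℝ := min (1 + s) (1 - s) with hδdef
  have hδ0 : 0 < δ := lt_min (by linarith) (by linarith)
  -- integrability on the left
  have hintL : ∀ ε : ℝ, ε ∈ Set.Ioo 0 δ →
      IntervalIntegrable f MeasureTheory.volume (-1) (s - ε) := by
    intro ε hε
    have hε1 : ε < 1 + s := lt_of_lt_of_le hε.2 (min_le_left _ _)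
    have hab : (-1 : ℝ) ≤ s - ε := by linarith
    have base : IntervalIntegrable (fun x : ℝ => x ^ (-(1/2) : ℝ))
        MeasureTheory.volume 0 (s - ε + 1) := intervalIntegral.intervalIntegrable_rpow' (by norm_num)
    have base2 : IntervalIntegrable (fun x : ℝ => (x - (-1)) ^ (-(1/2) : ℝ))
        MeasureTheory.volume (-1) (s - ε) := by
      have h := base.comp_sub_right (-1)
      have e1 : (0 : ℝ) + -1 = -1 := by norm_num
      have e2 : s - ε + 1 + -1 = s - ε := by ring
      rwa [e1, e2] at h
    set C : ℝ := 1 / (ε * Real.sqrt (1 - s)) with hC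
    have base3 : IntervalIntegrable (fun x : ℝ => C * (x - (-1)) ^ (-(1/2) : ℝ))
        MeasureTheory.volume (-1) (s - ε) := base2.const_mul C
    apply base3.mono_fun hfm.aestronglyMeasurable
    rw [Set.uIoc_of_le hab]
    filter_upwards [MeasureTheory.ae_restrict_mem measurableSet_Ioc] with x hx
    have hx1 : -1 < x := hx.1
    have hx2 : x ≤ s - ε := hx.2
    have h1x : 0 ≤ 1 + x := by linarith
    have hsx : 0 < s - x := by linarith [hε.1]
    have h1mx : 0 < 1 - x := by linarith
    have hsqrtsplit : Real.sqrt (1 - x ^ 2) = Real.sqrt (1 - x) * Real.sqrt (1 + x) :=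
      by rw [← Real.sqrt_mul h1mx.le]; ring_nf
    have hsq1s : 0 < Real.sqrt (1 - s) := Real.sqrt_pos.2 (by linarith)
    have hsq1x : 0 < Real.sqrt (1 - x) := Real.sqrt_pos.2 h1mx
    have hsqx : 0 < Real.sqrt (1 + x) := Real.sqrt_pos.2 (by linarith)
    have hrpow : (x - (-1)) ^ (-(1/2) : ℝ) = (Real.sqrt (1 + x))⁻¹ := by
      have e : x - (-1) = 1 + x := by ring
      rw [e, Real.rpow_neg h1x, ← Real.sqrt_eq_rpow]
    have hfx : f x = 1 / ((s - x) * (Real.sqrt (1 - x) * Real.sqrt (1 + x))) := by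
      simp only [hfdef, hsqrtsplit]
    have hfxpos : 0 < f x := by
      rw [hfx]; positivity
    have hrhs : C * (Real.sqrt (1 + x))⁻¹
        = 1 / (ε * Real.sqrt (1 - s) * Real.sqrt (1 + x)) := by
      rw [hC]
      field_simp
    have hden : 0 < ε * Real.sqrt (1 - s) * Real.sqrt (1 + x) :=
      mul_pos (mul_pos hε.1 hsq1s) hsqx
    rw [Real.norm_eq_abs, Real.norm_eq_abs, abs_of_pos hfxpos, hrpow, hrhs,
      abs_of_pos (one_div_pos.2 hden), hfx]
    apply one_div_le_one_div_of_le hden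
    have hsqle : Real.sqrt (1 - s) ≤ Real.sqrt (1 - x) :=
      Real.sqrt_le_sqrt (by linarith)
    have hεle : ε ≤ s - x := by linarith
    have h1 : ε * Real.sqrt (1 - s) ≤ (s - x) * Real.sqrt (1 - x) :=
      mul_le_mul hεle hsqle hsq1s.le hsx.le
    calc ε * Real.sqrt (1 - s) * Real.sqrt (1 + x)
        ≤ (s - x) * Real.sqrt (1 - x) * Real.sqrt (1 + x) :=
          mul_le_mul_of_nonneg_right h1 hsqx.le
      _ = (s - x) * (Real.sqrt (1 - x) * Real.sqrt (1 + x)) := by ring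
  -- integrability on the right
  have hintR : ∀ ε : ℝ, ε ∈ Set.Ioo 0 δ →
      IntervalIntegrable f MeasureTheory.volume (s + ε) 1 := by
    intro ε hε
    have hε1 : ε < 1 - s := lt_of_lt_of_le hε.2 (min_le_right _ _)
    have hab : s + ε ≤ (1 : ℝ) := by linarith
    have base : IntervalIntegrable (fun x : ℝ => x ^ (-(1/2) : ℝ))
        MeasureTheory.volume (1 - (s + ε)) 0 := intervalIntegral.intervalIntegrable_rpow' (by norm_num)
    have base2 : IntervalIntegrable (fun x : ℝ => (1 - x) ^ (-(1/2) : ℝ))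
        MeasureTheory.volume (s + ε) 1 := by
      have h := base.comp_sub_left 1
      have e1 : (1 : ℝ) - (1 - (s + ε)) = s + ε := by ring
      have e2 : (1 : ℝ) - 0 = 1 := by norm_num
      rwa [e1, e2] at h
    set C : ℝ := 1 / (ε * Real.sqrt (1 + s)) with hC
    have base3 : IntervalIntegrable (fun x : ℝ => C * (1 - x) ^ (-(1/2) : ℝ))
        MeasureTheory.volume (s + ε) 1 := base2.const_mul C
    apply base3.mono_fun hfm.aestronglyMeasurable
    rw [Set.uIoc_of_le hab]
    filter_upwards [MeasureTheory.ae_restrict_mem measurableSet_Ioc] with x hx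
    have hx1 : s + ε < x := hx.1
    have hx2 : x ≤ 1 := hx.2
    have h1x : 0 ≤ 1 - x := by linarith
    have hxs : 0 < x - s := by linarith [hε.1]
    have h1px : 0 < 1 + x := by linarith [hε.1]
    have hsqrtsplit : Real.sqrt (1 - x ^ 2) = Real.sqrt (1 - x) * Real.sqrt (1 + x) :=
      by rw [← Real.sqrt_mul h1x]; ring_nf
    have hsq1s : 0 < Real.sqrt (1 + s) := Real.sqrt_pos.2 (by linarith)
    have hsq1x : 0 < Real.sqrt (1 + x) := Real.sqrt_pos.2 h1px
    have hsqx : 0 ≤ Real.sqrt (1 - x) := Real.sqrt_nonneg _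
    have hrpow : (1 - x) ^ (-(1/2) : ℝ) = (Real.sqrt (1 - x))⁻¹ := by
      rw [Real.rpow_neg h1x, ← Real.sqrt_eq_rpow]
    have hfx : f x = -(1 / ((x - s) * (Real.sqrt (1 - x) * Real.sqrt (1 + x)))) := by
      simp only [hfdef, hsqrtsplit]
      rw [show s - x = -(x - s) by ring, neg_mul, div_neg]
    rw [Real.norm_eq_abs, Real.norm_eq_abs, hfx, abs_neg, hrpow]
    rcases eq_or_lt_of_le hsqx with hz | hz
    · rw [← hz]
      simp
    have hrhs : C * (Real.sqrt (1 - x))⁻¹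
        = 1 / (ε * Real.sqrt (1 + s) * Real.sqrt (1 - x)) := by
      rw [hC]
      field_simp
    have hden : 0 < ε * Real.sqrt (1 + s) * Real.sqrt (1 - x) :=
      mul_pos (mul_pos hε.1 hsq1s) hz
    have hden2 : 0 < (x - s) * (Real.sqrt (1 - x) * Real.sqrt (1 + x)) :=
      mul_pos hxs (mul_pos hz hsq1x)
    rw [hrhs, abs_of_pos (one_div_pos.2 hden2), abs_of_pos (one_div_pos.2 hden)]
    apply one_div_le_one_div_of_le hden
    have hsqle : Real.sqrt (1 + s) ≤ Real.sqrt (1 + x) :=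
      Real.sqrt_le_sqrt (by linarith)
    have hεle : ε ≤ x - s := by linarith
    have h1 : ε * Real.sqrt (1 + s) ≤ (x - s) * Real.sqrt (1 + x) :=
      mul_le_mul hεle hsqle hsq1s.le hxs.le
    calc ε * Real.sqrt (1 + s) * Real.sqrt (1 - x)
        ≤ (x - s) * Real.sqrt (1 + x) * Real.sqrt (1 - x) :=
          mul_le_mul_of_nonneg_right h1 hsqx
      _ = (x - s) * (Real.sqrt (1 - x) * Real.sqrt (1 + x)) := by ring
  -- values at endpoints
  have hFm1 : F (-1) = 0 := by
    have hD1 : D (-1) = 1 + s := by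
      simp only [hDdef]
      norm_num
    simp only [hFdef, hD1]
    have : (-1 : ℝ) - s = -(1 + s) := by ring
    rw [this, Real.log_neg_eq_log]
    ring
  have hF1 : F 1 = 0 := by
    have hD1 : D 1 = 1 - s := by
      simp only [hDdef]
      norm_num
    simp only [hFdef, hD1]
    ring
  -- FTC on both sides
  have hL : ∀ ε : ℝ, ε ∈ Set.Ioo 0 δ →
      (∫ x in (-1 : ℝ)..(s - ε), f x) = F (s - ε) := by
    intro ε hε
    have hε1 : ε < 1 + s := lt_of_lt_of_le hε.2 (min_le_left _ _)
    have hε2 : ε < 1 - s := lt_of_lt_of_le hε.2 (min_le_right _ _)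
    have hab : (-1 : ℝ) ≤ s - ε := by linarith
    rw [intervalIntegral.integral_eq_sub_of_hasDerivAt_of_le hab
      (fun x hx => (hFc x ⟨hx.1, by linarith [hx.2, hε.1]⟩ (by rintro rfl; linarith [hx.2, hε.1])).continuousWithinAt)
      (fun x hx => hderiv x ⟨hx.1, by linarith [hx.2, hε.1]⟩ (by rintro rfl; linarith [hx.2, hε.1]))
      (hintL ε hε), hFm1, sub_zero]
  have hR : ∀ ε : ℝ, ε ∈ Set.Ioo 0 δ →
      (∫ x in (s + ε)..(1 : ℝ), f x) = -F (s + ε) := by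
    intro ε hε
    have hε1 : ε < 1 + s := lt_of_lt_of_le hε.2 (min_le_left _ _)
    have hε2 : ε < 1 - s := lt_of_lt_of_le hε.2 (min_le_right _ _)
    have hab : s + ε ≤ (1 : ℝ) := by linarith
    rw [intervalIntegral.integral_eq_sub_of_hasDerivAt_of_le hab
      (fun x hx => (hFc x ⟨by linarith [hx.1, hε.1], hx.2⟩ (by rintro rfl; linarith [hx.1, hε.1])).continuousWithinAt)
      (fun x hx => hderiv x ⟨by linarith [hx.1, hε.1], hx.2⟩ (by rintro rfl; linarith [hx.1, hε.1]))
      (hintR ε hε), hF1, zero_sub]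
  -- the limit function
  set g : ℝ → ℝ := fun ε => (1 / t) * (Real.log (D (s - ε)) - Real.log (D (s + ε))) with hgdef
  have heq : (fun ε : ℝ =>
      (∫ x in (-1 : ℝ)..(s - ε), f x) + ∫ x in (s + ε)..(1 : ℝ), f x)
      =ᶠ[nhdsWithin 0 (Set.Ioi 0)] g := by
    filter_upwards [Ioo_mem_nhdsGT_of_mem (Set.mem_Ico.2 ⟨le_refl (0:ℝ), hδ0⟩)] with ε hε
    rw [hL ε hε, hR ε hε]
    simp only [hFdef, hgdef]
    have e1 : s - ε - s = -ε := by ring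
    have e2 : s + ε - s = ε := by ring
    rw [e1, e2, Real.log_neg_eq_log]
    ring
  have hDs : 0 < D s := hDpos s ⟨hs1.le, hs2.le⟩
  have hg0 : Tendsto g (nhds 0) (nhds 0) := by
    have h1 : Tendsto (fun ε : ℝ => D (s - ε)) (nhds 0) (nhds (D s)) := by
      have : Continuous fun ε : ℝ => D (s - ε) := hDc.comp (continuous_const.sub continuous_id)
      simpa using this.tendsto 0
    have h2 : Tendsto (fun ε : ℝ => D (s + ε)) (nhds 0) (nhds (D s)) := by
      have : Continuous fun ε : ℝ => D (s + ε) := hDc.comp (continuous_const.add continuous_id)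
      simpa using this.tendsto 0
    have hlog : Tendsto (fun ε : ℝ => Real.log (D (s - ε)) - Real.log (D (s + ε)))
        (nhds 0) (nhds (Real.log (D s) - Real.log (D s))) :=
      ((Real.continuousAt_log hDs.ne').tendsto.comp h1).sub
        ((Real.continuousAt_log hDs.ne').tendsto.comp h2)
    have h3 := hlog.const_mul (1 / t)
    rw [sub_self, mul_zero] at h3
    exact h3
  exact (hg0.mono_left nhdsWithin_le_nhds).congr' heq.symm
end
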